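/- arXiv:1204.1696 — 3 statements merged into one kernel-verified Lean document; each statement's English description precedes it below -/
import Mathlib

section
/- Let Φ be a Schwarz map on a unital C*-algebra 𝔸 (i.e., Φ linear, Φ(x*) = Φ(x)*, and Φ(x)*Φ(x) ≤ Φ(x*x) for all x). Set X = Φ(f*f) − Φ(f)*Φ(f), Y = Φ(g*g) − Φ(g)*Φ(g), Z = Φ(f*g) − Φ(f)*Φ(g). Then for every state φ on 𝔸, |φ(Z)| ≤ φ(X)^{1/2} · φ(Y)^{1/2}. -/
theorem uchiyama_schwarz_state_inequality
    {𝔸 : Type*} [CStarAlgebra 𝔸] [PartialOrder 𝔸] [StarOrderedRing 𝔸]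
    (Φ : 𝔸 →ₗ[ℂ] 𝔸)
    (hstar : ∀ x : 𝔸, Φ (star x) = star (Φ x))
    (hschwarz : ∀ x : 𝔸, star (Φ x) * Φ x ≤ Φ (star x * x))
    (φ : 𝔸 →ₗ[ℂ] ℂ)
    (hφpos : ∀ a : 𝔸, 0 ≤ a → ∃ r : ℝ, 0 ≤ r ∧ φ a = r)
    (hφunital : φ 1 = 1)
    (f g : 𝔸) :
    ‖φ (Φ (star f * g) - star (Φ f) * Φ g)‖ ≤
      Real.sqrt ((φ (Φ (star f * f) - star (Φ f) * Φ f)).re) *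
        Real.sqrt ((φ (Φ (star g * g) - star (Φ g) * Φ g)).re) := by
  set B : 𝔸 → 𝔸 → ℂ := fun x y => φ (Φ (star x * y) - star (Φ x) * Φ y) with hB
  -- positivity on the diagonal
  have hpos : ∀ x, ∃ r : ℝ, 0 ≤ r ∧ B x x = (r : ℂ) := by
    intro x
    exact hφpos _ (sub_nonneg.2 (hschwarz x))
  have him : ∀ x, (B x x).im = 0 := by
    intro x
    obtain ⟨r, _, hr⟩ := hpos x
    simp [hr]
  have hre : ∀ x, 0 ≤ (B x x).re := by
    intro x
    obtain ⟨r, hr0, hr⟩ := hpos x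
    simp [hr, hr0]
  -- sesquilinearity
  have haddl : ∀ x y z, B (x + y) z = B x z + B y z := by
    intro x y z
    simp only [hB, star_add, add_mul, map_add, map_sub]
    ring
  have haddr : ∀ x y z, B x (y + z) = B x y + B x z := by
    intro x y z
    simp only [hB, mul_add, map_add, map_sub]
    ring
  have hsmull : ∀ (r : ℂ) x y, B (r • x) y = starRingEnd ℂ r * B x y := by
    intro r x y
    simp only [hB, star_smul, smul_mul_assoc, map_smul, ← smul_sub, smul_eq_mul,
      Complex.star_def]
  have hsmulr : ∀ (r : ℂ) x y, B x (r • y) = r * B x y := by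
    intro r x y
    simp only [hB, mul_smul_comm, map_smul, ← smul_sub, smul_eq_mul]
  -- expansion
  have hexp : ∀ (t : ℂ) x y, B (x + t • y) (x + t • y)
      = B x x + t * B x y + starRingEnd ℂ t * B y x + starRingEnd ℂ t * t * B y y := by
    intro t x y
    simp only [haddl, haddr, hsmull, hsmulr]
    ring
  -- conjugate symmetry
  have hconj : ∀ x y, starRingEnd ℂ (B y x) = B x y := by
    intro x y
    have h1 := him (x + (1 : ℂ) • y)
    rw [hexp] at h1
    have h2 := him (x + Complex.I • y)
    rw [hexp] at h2
    simp only [map_one, one_mul, mul_one, Complex.conj_I, Complex.add_im, Complex.mul_im,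
      Complex.mul_re, Complex.neg_re, Complex.neg_im, Complex.I_re, Complex.I_im,
      him x, him y] at h1 h2
    apply Complex.ext <;>
      simp only [Complex.conj_re, Complex.conj_im] <;> linarith
  -- build the pre-inner-product core
  letI c : PreInnerProductSpace.Core ℂ 𝔸 :=
    { inner := B
      conj_inner_symm := fun x y => hconj x y
      re_inner_nonneg := fun x => hre x
      add_left := fun x y z => haddl x y z
      smul_left := fun x y r => hsmull r x y }
  have key := @InnerProductSpace.Core.inner_mul_inner_self_le ℂ 𝔸 _ _ _ c f g
  have hsymm : ‖(B g f : ℂ)‖ = ‖(B f g : ℂ)‖ := by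
    rw [← hconj g f, RCLike.norm_conj]
  change ‖(B f g : ℂ)‖ * ‖(B g f : ℂ)‖ ≤ RCLike.re (B f f) * RCLike.re (B g g) at key
  rw [hsymm, RCLike.re_to_complex, RCLike.re_to_complex] at key
  have habs : ‖B f g‖ = ‖(B f g : ℂ)‖ := rfl
  show ‖B f g‖ ≤ Real.sqrt ((B f f).re) * Real.sqrt ((B g g).re)
  rw [habs, ← Real.sqrt_mul (hre f)]
  have : ‖(B f g : ℂ)‖ = Real.sqrt (‖(B f g : ℂ)‖ * ‖(B f g : ℂ)‖) := by
    rw [Real.sqrt_mul_self (norm_nonneg _)]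
  rw [this]
  exact Real.sqrt_le_sqrt key
end

section
/- Let {Aₙ} and {Bₙ} be sequences of real symmetric (or Hermitian) n×n matrices. Suppose {Aₙ} converges to {Bₙ} in strong cluster, Bₙ ≥ δIₙ > 0 for all n (hence Bₙ is invertible), and the Aₙ, Bₙ are uniformly bounded in operator norm. Then for every ε > 0 there exist integers N₁(ε) and N₂(ε) such that for all n > N₂(ε), all eigenvalues of Bₙ⁻¹Aₙ lie in (1 − ε, 1 + ε) except for at most N₁(ε) = O(1) outliers. -/
open Matrix
open scoped ComplexOrder

/-- The operator (spectral) norm of a matrix. -/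
noncomputable def opNorm {n : ℕ} (A : Matrix (Fin n) (Fin n) ℂ) : ℝ :=
  ‖Matrix.toEuclideanCLM (𝕜 := ℂ) A‖

open scoped Matrix.Norms.L2Operator

section AuxLemmas

variable {n : ℕ}

/-- operator norm of a diagonal matrix bounded by bound on entries -/
lemma norm_diagonal_le' {d : Fin n → ℂ} {c : ℝ} (hc : 0 ≤ c) (h : ∀ i, ‖d i‖ ≤ c) :
    ‖Matrix.diagonal d‖ ≤ c := by
  rw [Matrix.cstar_norm_def]
  refine ContinuousLinearMap.opNorm_le_bound _ hc (fun x => ?_)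
  have hx : ∀ i, (toEuclideanCLM (𝕜 := ℂ) (diagonal d) x) i = d i * x i := by
    intro i
    show (diagonal d *ᵥ (WithLp.equiv 2 _ x)) i = _
    rw [Matrix.mulVec_diagonal]
    rfl
  rw [EuclideanSpace.norm_eq, EuclideanSpace.norm_eq]
  have h1 : ∀ i : Fin n, ‖(toEuclideanCLM (𝕜 := ℂ) (diagonal d) x) i‖ ^ 2
      ≤ c ^ 2 * ‖x i‖ ^ 2 := by
    intro i
    rw [hx i, norm_mul, mul_pow]
    have := h i
    have : ‖d i‖ ^ 2 ≤ c ^ 2 := by nlinarith [norm_nonneg (d i)]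
    nlinarith [sq_nonneg (‖x i‖)]
  calc Real.sqrt (∑ i, ‖(toEuclideanCLM (𝕜 := ℂ) (diagonal d) x) i‖ ^ 2)
      ≤ Real.sqrt (∑ i, c ^ 2 * ‖x i‖ ^ 2) :=
        Real.sqrt_le_sqrt (Finset.sum_le_sum fun i _ => h1 i)
    _ = c * Real.sqrt (∑ i, ‖x i‖ ^ 2) := by
        rw [← Finset.mul_sum, Real.sqrt_mul (sq_nonneg c), Real.sqrt_sq hc]

lemma repr_CLM_apply' {H : Matrix (Fin n) (Fin n) ℂ} (hH : H.IsHermitian)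
    (x : EuclideanSpace ℂ (Fin n)) (j : Fin n) :
    hH.eigenvectorBasis.repr (toEuclideanCLM (𝕜 := ℂ) H x) j
      = (hH.eigenvalues j : ℂ) * hH.eigenvectorBasis.repr x j := by
  have hsym : (toEuclideanLin H).IsSymmetric := isHermitian_iff_isSymmetric.mp hH
  have hCLM : toEuclideanCLM (𝕜 := ℂ) H x = toEuclideanLin H x := rfl
  have heig : toEuclideanLin H (hH.eigenvectorBasis j)
      = (hH.eigenvalues j : ℂ) • hH.eigenvectorBasis j := by
    have h1 : H *ᵥ ⇑(hH.eigenvectorBasis j) = hH.eigenvalues j • ⇑(hH.eigenvectorBasis j) :=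
      hH.mulVec_eigenvectorBasis j
    apply (WithLp.equiv 2 (Fin n → ℂ)).injective
    rw [show ∀ v : EuclideanSpace ℂ (Fin n), WithLp.equiv 2 (Fin n → ℂ) (toEuclideanLin H v) = H *ᵥ WithLp.equiv 2 (Fin n → ℂ) v from fun v => rfl]
    rw [show WithLp.equiv 2 (Fin n → ℂ) (hH.eigenvectorBasis j) = ⇑(hH.eigenvectorBasis j) from rfl,
      h1]
    funext i
    simp [Complex.real_smul]
  rw [hCLM, OrthonormalBasis.repr_apply_apply, OrthonormalBasis.repr_apply_apply,
    ← hsym (hH.eigenvectorBasis j) x, heig, inner_smul_left]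
  simp [Complex.conj_ofReal]

-- norm bound from inverse of sqrt
lemma inv_sqrt_norm_le {Bm : Matrix (Fin n) (Fin n) ℂ} {δ : ℝ} (hδ : 0 < δ)
    (hBδ : (Bm - (δ : ℂ) • 1).PosSemidef)
    {S : Matrix (Fin n) (Fin n) ℂ} (hS : S.IsHermitian) (hSB : S * S = Bm)
    (hSM : S * S⁻¹ = 1) : ‖S⁻¹‖ ≤ (Real.sqrt δ)⁻¹ := by
  rw [Matrix.cstar_norm_def]
  refine ContinuousLinearMap.opNorm_le_bound _ (by positivity) (fun x => ?_)
  set y := toEuclideanCLM (𝕜 := ℂ) S⁻¹ x with hy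
  have hxy : toEuclideanCLM (𝕜 := ℂ) S y = x := by
    rw [hy, ← ContinuousLinearMap.comp_apply, ← ContinuousLinearMap.mul_def, ← _root_.map_mul, hSM, _root_.map_one,
      ContinuousLinearMap.one_apply]
  have key : δ * ‖y‖ ^ 2 ≤ ‖toEuclideanCLM (𝕜 := ℂ) S y‖ ^ 2 := by
    have h1 : ‖toEuclideanCLM (𝕜 := ℂ) S y‖ ^ 2
        = RCLike.re (inner (𝕜 := ℂ) (toEuclideanCLM (𝕜 := ℂ) S y) (toEuclideanCLM (𝕜 := ℂ) S y)) := by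
      rw [inner_self_eq_norm_sq]
    have h2 : (inner (𝕜 := ℂ) (toEuclideanCLM (𝕜 := ℂ) S y) (toEuclideanCLM (𝕜 := ℂ) S y))
        = inner (𝕜 := ℂ) y (toEuclideanCLM (𝕜 := ℂ) Bm y) := by
      rw [← ContinuousLinearMap.adjoint_inner_right]
      congr 1
      rw [← ContinuousLinearMap.comp_apply, ← ContinuousLinearMap.mul_def]
      congr 1
      have hstar : ContinuousLinearMap.adjoint (toEuclideanCLM (𝕜 := ℂ) S)
          = toEuclideanCLM (𝕜 := ℂ) Sᴴ := by
        calc ContinuousLinearMap.adjoint (toEuclideanCLM (𝕜 := ℂ) S)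
            = star (toEuclideanCLM (𝕜 := ℂ) S) := (ContinuousLinearMap.star_eq_adjoint _).symm
          _ = toEuclideanCLM (𝕜 := ℂ) (star S) := (map_star _ _).symm
          _ = toEuclideanCLM (𝕜 := ℂ) Sᴴ := rfl
      rw [hstar, hS.eq, ← _root_.map_mul, hSB]
    have h3 : inner (𝕜 := ℂ) y (toEuclideanCLM (𝕜 := ℂ) Bm y)
        = inner (𝕜 := ℂ) y (toEuclideanCLM (𝕜 := ℂ) (Bm - (δ : ℂ) • 1) y)
          + (δ : ℂ) * inner (𝕜 := ℂ) y y := by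
      rw [map_sub, _root_.map_smul, _root_.map_one]
      simp only [ContinuousLinearMap.sub_apply, ContinuousLinearMap.smul_apply,
        ContinuousLinearMap.one_apply, inner_sub_right, inner_smul_right, smul_eq_mul]
      ring
    have h4 : 0 ≤ RCLike.re (inner (𝕜 := ℂ) y (toEuclideanCLM (𝕜 := ℂ) (Bm - (δ : ℂ) • 1) y)) := by
      have := hBδ.re_dotProduct_nonneg (WithLp.equiv 2 _ y)
      have heq : inner (𝕜 := ℂ) y (toEuclideanCLM (𝕜 := ℂ) (Bm - (δ : ℂ) • 1) y)
          = dotProduct (star (WithLp.equiv 2 _ y))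
              ((Bm - (δ : ℂ) • 1) *ᵥ (WithLp.equiv 2 _ y)) := by
        rw [EuclideanSpace.inner_eq_star_dotProduct, dotProduct_comm]
        rfl
      rw [heq]
      exact this
    rw [h1, h2, h3]
    have : RCLike.re ((δ : ℂ) * inner (𝕜 := ℂ) y y) = δ * ‖y‖ ^ 2 := by
      rw [inner_self_eq_norm_sq_to_K, ← RCLike.ofReal_pow]
      simp [RCLike.mul_re, ← Complex.ofReal_pow]
    rw [map_add, this]
    linarith
  rw [hxy] at key
  have h5 : Real.sqrt δ * ‖y‖ ≤ ‖x‖ := by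
    have := Real.sqrt_le_sqrt key
    rwa [Real.sqrt_mul hδ.le, Real.sqrt_sq (norm_nonneg _), Real.sqrt_sq (norm_nonneg _)] at this
  rw [inv_mul_eq_div, le_div_iff₀ (Real.sqrt_pos.2 hδ)]
  linarith

set_option maxHeartbeats 2000000 in
lemma key_count {H S L : Matrix (Fin n) (Fin n) ℂ} (hH : H.IsHermitian) (hHSL : H = S + L)
    {c ε : ℝ} (hcε : c < ε) (hS : ‖S‖ ≤ c) {r : ℕ} (hL : L.rank ≤ r) :
    (Finset.univ.filter fun j => ε ≤ |hH.eigenvalues j|).card ≤ r := by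
  have hc0 : 0 ≤ c := (norm_nonneg S).trans hS
  have hε0 : 0 ≤ ε := hc0.trans hcε.le
  by_contra hcon
  push_neg at hcon
  set T := Finset.univ.filter fun j => ε ≤ |hH.eigenvalues j| with hT
  set b := hH.eigenvectorBasis with hb
  let e : (↥T → ℂ) →ₗ[ℂ] (Fin n → ℂ) :=
    { toFun := fun cc j => if hj : j ∈ T then cc ⟨j, hj⟩ else 0
      map_add' := fun a b => by funext j; by_cases hj : j ∈ T <;> simp [hj]
      map_smul' := fun m a => by funext j; by_cases hj : j ∈ T <;> simp [hj] }
  let q := WithLp.linearEquiv 2 ℂ (Fin n → ℂ)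
  let F : (↥T → ℂ) →ₗ[ℂ] (Fin n → ℂ) :=
    L.mulVecLin ∘ₗ q.toLinearMap ∘ₗ b.repr.symm.toLinearEquiv.toLinearMap
      ∘ₗ q.symm.toLinearMap ∘ₗ e
  have hrange : ∀ cc, F cc ∈ LinearMap.range L.mulVecLin := fun cc => ⟨_, rfl⟩
  let F' := F.codRestrict (LinearMap.range L.mulVecLin) hrange
  have hni : ¬ Function.Injective F' := by
    intro hinj
    have h1 := LinearMap.finrank_le_finrank_of_injective hinj
    have h2 : T.card ≤ L.rank := by
      simpa [Module.finrank_pi, Fintype.card_coe, Matrix.rank] using h1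
    omega
  rw [Function.not_injective_iff] at hni
  obtain ⟨a1, a2, hfe, hne⟩ := hni
  set cc := a1 - a2 with hcc
  have hcc0 : cc ≠ 0 := sub_ne_zero_of_ne hne
  have hFcc : F cc = 0 := by
    have : F' cc = 0 := by rw [hcc, map_sub, hfe, sub_self]
    have := congrArg Subtype.val this
    simpa [F'] using this
  set x : EuclideanSpace ℂ (Fin n) := q.symm (e cc) with hx
  set v := b.repr.symm x with hv
  have hvrepr : b.repr v = x := b.repr.apply_symm_apply x
  have hxj : ∀ j : Fin n, x j = if hj : j ∈ T then cc ⟨j, hj⟩ else 0 := fun j => rfl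
  have hx0 : x ≠ 0 := by
    intro h0
    apply hcc0
    have he0 : e cc = 0 := by
      have h1 := congrArg (fun z => q z) h0
      simpa [hx, q.apply_symm_apply] using h1
    funext j0
    have h2 := congrFun he0 j0.1
    simpa [e, j0.2] using h2
  have hv0 : v ≠ 0 := by
    intro h0
    apply hx0
    rw [← hvrepr, h0, map_zero]
  have hLv : toEuclideanCLM (𝕜 := ℂ) L v = 0 := by
    apply (WithLp.equiv 2 (Fin n → ℂ)).injective
    have heq : WithLp.equiv 2 (Fin n → ℂ) (toEuclideanCLM (𝕜 := ℂ) L v) = F cc := rfl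
    rw [heq, hFcc]
    rfl
  have hHv : toEuclideanCLM (𝕜 := ℂ) H v = toEuclideanCLM (𝕜 := ℂ) S v := by
    rw [hHSL, _root_.map_add, ContinuousLinearMap.add_apply, hLv, add_zero]
  have hub : ‖toEuclideanCLM (𝕜 := ℂ) H v‖ ≤ c * ‖v‖ := by
    rw [hHv]
    calc ‖toEuclideanCLM (𝕜 := ℂ) S v‖ ≤ ‖toEuclideanCLM (𝕜 := ℂ) S‖ * ‖v‖ :=
          ContinuousLinearMap.le_opNorm _ _
      _ ≤ c * ‖v‖ := by
          refine mul_le_mul_of_nonneg_right ?_ (norm_nonneg v)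
          rw [← Matrix.cstar_norm_def]
          exact hS
  have hlb : ε * ‖v‖ ≤ ‖toEuclideanCLM (𝕜 := ℂ) H v‖ := by
    have hr : ∀ j, b.repr (toEuclideanCLM (𝕜 := ℂ) H v) j = (hH.eigenvalues j : ℂ) * x j :=
      fun j => by rw [hb, repr_CLM_apply' hH v j, ← hb, hvrepr]
    have hnv : ‖toEuclideanCLM (𝕜 := ℂ) H v‖
        = Real.sqrt (∑ j, ‖(hH.eigenvalues j : ℂ) * x j‖ ^ 2) := by
      rw [← b.repr.norm_map (toEuclideanCLM (𝕜 := ℂ) H v), EuclideanSpace.norm_eq]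
      congr 1
      exact Finset.sum_congr rfl fun j _ => by rw [hr j]
    have hnx : ‖v‖ = Real.sqrt (∑ j, ‖x j‖ ^ 2) := by
      rw [← b.repr.norm_map v, hvrepr, EuclideanSpace.norm_eq]
    have hterm : ∀ j, ε ^ 2 * ‖x j‖ ^ 2 ≤ ‖(hH.eigenvalues j : ℂ) * x j‖ ^ 2 := by
      intro j
      by_cases hj : j ∈ T
      · have hje : ε ≤ |hH.eigenvalues j| := by
          rw [hT] at hj
          exact (Finset.mem_filter.1 hj).2
        rw [norm_mul, mul_pow, Complex.norm_real, Real.norm_eq_abs]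
        have : ε ^ 2 ≤ |hH.eigenvalues j| ^ 2 := by nlinarith
        nlinarith [sq_nonneg (‖x j‖)]
      · have hxz : x j = 0 := by rw [hxj j]; simp [hj]
        simp [hxz]
    rw [hnv, hnx]
    calc ε * Real.sqrt (∑ j, ‖x j‖ ^ 2) = Real.sqrt (ε ^ 2 * ∑ j, ‖x j‖ ^ 2) := by
          rw [Real.sqrt_mul (sq_nonneg ε), Real.sqrt_sq hε0]
      _ ≤ Real.sqrt (∑ j, ‖(hH.eigenvalues j : ℂ) * x j‖ ^ 2) := by
          refine Real.sqrt_le_sqrt ?_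
          rw [Finset.mul_sum]
          exact Finset.sum_le_sum fun j _ => hterm j
  have hvpos : 0 < ‖v‖ := norm_pos_iff.2 hv0
  nlinarith

lemma spectrum_herm_mem {H : Matrix (Fin n) (Fin n) ℂ} (hH : H.IsHermitian) {z : ℂ}
    (hz : z ∈ spectrum ℂ H) : ∃ j, z = (hH.eigenvalues j : ℂ) := by
  set V := (hH.eigenvectorUnitary : Matrix (Fin n) (Fin n) ℂ) with hV
  have hVmem : V ∈ unitary (Matrix (Fin n) (Fin n) ℂ) := hH.eigenvectorUnitary.2
  let u : (Matrix (Fin n) (Fin n) ℂ)ˣ :=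
    ⟨V, star V, Unitary.mul_star_self_of_mem hVmem, Unitary.star_mul_self_of_mem hVmem⟩
  rw [hH.spectral_theorem] at hz
  rw [Unitary.conjStarAlgAut_apply] at hz
  have hconj : (V * diagonal (RCLike.ofReal ∘ hH.eigenvalues) * star V : Matrix (Fin n) (Fin n) ℂ)
      = (u : Matrix (Fin n) (Fin n) ℂ) * diagonal (RCLike.ofReal ∘ hH.eigenvalues)
        * ((u⁻¹ : (Matrix (Fin n) (Fin n) ℂ)ˣ) : Matrix (Fin n) (Fin n) ℂ) := rfl
  rw [hconj, spectrum.units_conjugate, spectrum_diagonal] at hz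
  obtain ⟨j, hj⟩ := hz
  exact ⟨j, hj.symm⟩

end AuxLemmas

set_option maxHeartbeats 1000000 in
theorem preconditioned_eigenvalue_cluster
    (A B : (n : ℕ) → Matrix (Fin n) (Fin n) ℂ)
    (hA : ∀ n, (A n).IsHermitian) (hB : ∀ n, (B n).IsHermitian)
    -- strong cluster of Aₙ to Bₙ
    (hcluster : ∀ ε > (0 : ℝ), ∃ N₁ N₂ : ℕ, ∀ n : ℕ, N₂ < n →
      (Finset.univ.filter
        (fun j : Fin n => ε ≤ |((hA n).sub (hB n)).eigenvalues j|)).card ≤ N₁)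
    -- Bₙ ≥ δ Iₙ > 0
    (δ : ℝ) (hδ : 0 < δ) (hBδ : ∀ n, (B n - (δ : ℂ) • 1).PosSemidef)
    -- uniform boundedness in operator norm
    (C : ℝ) (hbound : ∀ n, opNorm (A n) ≤ C ∧ opNorm (B n) ≤ C) :
    ∀ ε > (0 : ℝ), ∃ N₁ N₂ : ℕ, ∀ n : ℕ, N₂ < n →
      (spectrum ℂ ((B n)⁻¹ * A n) \ {z : ℂ | ‖z - 1‖ < ε}).ncard ≤ N₁ := by
  intro ε hε
  obtain ⟨N₁, N₂, hN⟩ := hcluster (ε * δ / 2) (by positivity)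
  refine ⟨N₁, N₂, fun n hn => ?_⟩
  classical
  -- B n is positive definite
  have hBpos : (B n).PosDef := by
    have hδ1 : ((δ : ℂ) • (1 : Matrix (Fin n) (Fin n) ℂ)).PosDef := by
      rw [smul_one_eq_diagonal]
      exact posDef_diagonal_iff.mpr fun i => Complex.zero_lt_real.mpr hδ
    have h2 := Matrix.PosDef.posSemidef_add (hBδ n) hδ1
    rwa [sub_add_cancel] at h2
  -- square root of B n, and its inverse
  obtain ⟨Sq, hSqps, hSqB⟩ : ∃ Sq : Matrix (Fin n) (Fin n) ℂ, Sq.PosSemidef ∧ Sq * Sq = B n := by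
    open scoped MatrixOrder in
    exact ⟨CFC.sqrt (B n), Matrix.nonneg_iff_posSemidef.mp (CFC.sqrt_nonneg _),
      CFC.sqrt_mul_sqrt_self _ (Matrix.nonneg_iff_posSemidef.mpr hBpos.posSemidef)⟩
  have hSqh : Sq.IsHermitian := hSqps.1
  have hdet : IsUnit Sq.det := by
    rw [isUnit_iff_ne_zero]
    intro h0
    have : (B n).det = Sq.det * Sq.det := by rw [← hSqB, det_mul]
    have := hBpos.det_pos
    rw [‹(B n).det = _›, h0, mul_zero] at this
    exact lt_irrefl _ this
  set M := Sq⁻¹ with hM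
  have hSM : Sq * M = 1 := mul_nonsing_inv _ hdet
  have hMS : M * Sq = 1 := nonsing_inv_mul _ hdet
  have hMh : M.IsHermitian := hSqh.inv
  have hMnorm : ‖M‖ ≤ (Real.sqrt δ)⁻¹ := inv_sqrt_norm_le hδ (hBδ n) hSqh hSqB hSM
  -- eigendecomposition of D = A n - B n
  set D := A n - B n with hDdef
  have hD : D.IsHermitian := (hA n).sub (hB n)
  set μ := hD.eigenvalues with hμ
  set V := (hD.eigenvectorUnitary : Matrix (Fin n) (Fin n) ℂ) with hV
  have hVmem : V ∈ unitary (Matrix (Fin n) (Fin n) ℂ) := hD.eigenvectorUnitary.2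
  set dsmall : Fin n → ℂ := fun j => if ε * δ / 2 ≤ |μ j| then 0 else (μ j : ℂ) with hdsmall
  set dbig : Fin n → ℂ := fun j => if ε * δ / 2 ≤ |μ j| then (μ j : ℂ) else 0 with hdbig
  set S₀ := V * diagonal dsmall * star V with hS₀
  set L₀ := V * diagonal dbig * star V with hL₀
  have hD_eq : D = S₀ + L₀ := by
    have hsum : diagonal dsmall + diagonal dbig = diagonal (RCLike.ofReal ∘ μ) := by
      have hfun : (fun i => dsmall i + dbig i) = (RCLike.ofReal ∘ μ : Fin n → ℂ) := by
        funext j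
        by_cases hj : ε * δ / 2 ≤ |μ j| <;>
          simp [hdsmall, hdbig, hj, Function.comp]
      rw [diagonal_add, hfun]
    rw [hS₀, hL₀, ← Matrix.add_mul, ← Matrix.mul_add, hsum]
    have := hD.spectral_theorem
    rw [Unitary.conjStarAlgAut_apply] at this
    exact this
  -- conjugated matrices
  set H := M * D * M with hH
  have hHh : H.IsHermitian := by
    rw [Matrix.IsHermitian, hH, conjTranspose_mul, conjTranspose_mul, hMh.eq, hD.eq, mul_assoc]
  -- bound on the small part
  have hS'norm : ‖M * S₀ * M‖ ≤ ε / 2 := by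
    have h1 : ‖S₀‖ ≤ ε * δ / 2 := by
      have h2 : ‖diagonal dsmall‖ ≤ ε * δ / 2 := by
        refine norm_diagonal_le' (by positivity) fun i => ?_
        by_cases hi : ε * δ / 2 ≤ |μ i|
        · simp [hdsmall, hi]; positivity
        · push_neg at hi
          simp only [hdsmall, if_neg (not_le.mpr hi)]
          rw [Complex.norm_real, Real.norm_eq_abs]
          exact hi.le
      calc ‖S₀‖ = ‖diagonal dsmall‖ := by
            rw [hS₀, CStarRing.norm_mul_mem_unitary _ (Unitary.star_mem hVmem),
              CStarRing.norm_mem_unitary_mul _ hVmem]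
        _ ≤ ε * δ / 2 := h2
    have hMnn : (0:ℝ) ≤ (Real.sqrt δ)⁻¹ := by positivity
    calc ‖M * S₀ * M‖ ≤ ‖M * S₀‖ * ‖M‖ := norm_mul_le _ _
      _ ≤ (‖M‖ * ‖S₀‖) * ‖M‖ :=
          mul_le_mul_of_nonneg_right (norm_mul_le _ _) (norm_nonneg _)
      _ ≤ ((Real.sqrt δ)⁻¹ * (ε * δ / 2)) * (Real.sqrt δ)⁻¹ := by
          refine mul_le_mul ?_ hMnorm (norm_nonneg _) (by positivity)
          exact mul_le_mul hMnorm h1 (norm_nonneg _) hMnn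
      _ = ε / 2 * ((Real.sqrt δ)⁻¹ * (Real.sqrt δ)⁻¹ * δ) := by ring
      _ = ε / 2 := by
          rw [← mul_inv, Real.mul_self_sqrt hδ.le, inv_mul_cancel₀ (ne_of_gt hδ), mul_one]
  -- rank bound on the big part
  have hL'rank : (M * L₀ * M).rank ≤ N₁ := by
    have h1 : (M * L₀ * M).rank ≤ (diagonal dbig).rank := by
      calc (M * L₀ * M).rank ≤ (M * L₀).rank := rank_mul_le_left _ _
        _ ≤ L₀.rank := rank_mul_le_right _ _
        _ ≤ (V * diagonal dbig).rank := by rw [hL₀]; exact rank_mul_le_left _ _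
        _ ≤ (diagonal dbig).rank := rank_mul_le_right _ _
    have h2 : (diagonal dbig).rank = (Finset.univ.filter fun i => dbig i ≠ 0).card := by
      rw [rank_diagonal, Fintype.card_subtype]
    have h3 : (Finset.univ.filter fun i => dbig i ≠ 0).card
        ≤ (Finset.univ.filter fun j : Fin n => ε * δ / 2 ≤ |μ j|).card := by
      refine Finset.card_le_card fun i hi => ?_
      simp only [Finset.mem_filter, Finset.mem_univ, true_and] at hi ⊢
      by_contra hc
      exact hi (by simp [hdbig, hc])
    have h4 : (Finset.univ.filter fun j : Fin n => ε * δ / 2 ≤ |μ j|).card ≤ N₁ := hN n hn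
    omega
  -- apply the key counting lemma
  have hHsum : H = M * S₀ * M + M * L₀ * M := by
    rw [hH, hD_eq]
    noncomm_ring
  have hTcard : (Finset.univ.filter fun j => ε ≤ |hHh.eigenvalues j|).card ≤ N₁ :=
    key_count hHh hHsum (half_lt_self hε) hS'norm hL'rank
  -- spectrum identification
  have hMAM : spectrum ℂ ((B n)⁻¹ * A n) = spectrum ℂ (M * A n * M) := by
    have hBinv : (B n)⁻¹ = M * M := by rw [← hSqB, Matrix.mul_inv_rev]
    let u : (Matrix (Fin n) (Fin n) ℂ)ˣ := ⟨Sq, M, hSM, hMS⟩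
    have hconj : (B n)⁻¹ * A n
        = ((u⁻¹ : (Matrix (Fin n) (Fin n) ℂ)ˣ) : Matrix (Fin n) (Fin n) ℂ) * (M * A n * M)
          * ((u : (Matrix (Fin n) (Fin n) ℂ)ˣ) : Matrix (Fin n) (Fin n) ℂ) := by
      show (B n)⁻¹ * A n = M * (M * A n * M) * Sq
      rw [hBinv]
      calc M * M * A n = M * M * A n * (M * Sq) := by rw [hMS, mul_one]
        _ = M * (M * A n * M) * Sq := by noncomm_ring
    rw [hconj, spectrum.units_conjugate']
  have hH1 : M * A n * M - 1 = H := by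
    have hMBM : M * B n * M = 1 := by
      rw [← hSqB]
      calc M * (Sq * Sq) * M = (M * Sq) * (Sq * M) := by noncomm_ring
        _ = 1 := by rw [hMS, hSM, one_mul]
    have hh : H = M * A n * M - M * B n * M := by rw [hH, hDdef]; noncomm_ring
    rw [hh, hMBM]
  -- conclude via image of the eigenvalue set
  set f : Fin n → ℂ := fun j => (hHh.eigenvalues j : ℂ) + 1 with hf
  set T := Finset.univ.filter fun j => ε ≤ |hHh.eigenvalues j| with hT
  have hsub : spectrum ℂ ((B n)⁻¹ * A n) \ {z : ℂ | ‖z - 1‖ < ε}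
      ⊆ ↑(T.image f) := by
    intro z hz
    obtain ⟨hzs, hzb⟩ := hz
    rw [Set.mem_setOf_eq, not_lt] at hzb
    rw [hMAM] at hzs
    have h5 : z - 1 ∈ spectrum ℂ (M * A n * M - algebraMap ℂ (Matrix (Fin n) (Fin n) ℂ) 1) := by
      rw [← spectrum.sub_singleton_eq]
      exact Set.sub_mem_sub hzs rfl
    have h6 : z - 1 ∈ spectrum ℂ H := by
      rwa [show (algebraMap ℂ (Matrix (Fin n) (Fin n) ℂ)) 1 = 1 from map_one _, hH1] at h5
    obtain ⟨j, hj⟩ := spectrum_herm_mem hHh h6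
    have habs : ‖z - 1‖ = |hHh.eigenvalues j| := by
      rw [hj, Complex.norm_real, Real.norm_eq_abs]
    have hjT : j ∈ T := by
      rw [hT, Finset.mem_filter]
      exact ⟨Finset.mem_univ j, by linarith⟩
    refine Finset.mem_coe.mpr (Finset.mem_image.mpr ⟨j, hjT, ?_⟩)
    show (hHh.eigenvalues j : ℂ) + 1 = z
    rw [← hj]
    ring
  calc (spectrum ℂ ((B n)⁻¹ * A n) \ {z : ℂ | ‖z - 1‖ < ε}).ncard
      ≤ (T.image f).card := by
        rw [← Set.ncard_coe_finset]
        exact Set.ncard_le_ncard hsub (T.image f).finite_toSet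
    _ ≤ T.card := Finset.card_image_le
    _ ≤ N₁ := hTcard
end

section
/- Let Φ be a positive linear map between unital C*-algebras 𝔸 and 𝔹 with Φ(1) ≤ 1, and suppose either 𝔸 or 𝔹 is commutative. If ‖Φ‖ ≤ 1 then Φ is a Schwarz map: Φ(a*a) ≥ Φ(a)*Φ(a) for all a ∈ 𝔸. -/
section SchwarzHelpers

open scoped ComplexOrder

lemma herm_aux {A : Type*} [CStarAlgebra A] [PartialOrder A] [StarOrderedRing A]
    (ψ : A →ₗ[ℂ] ℂ) (hψ : ∀ x : A, 0 ≤ x → 0 ≤ ψ x) (x : A) :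
    ψ (star x) = starRingEnd ℂ (ψ x) := by
  have him : ∀ y : A, IsSelfAdjoint y → (ψ y).im = 0 := by
    intro y hy
    have e1 := (Complex.nonneg_iff.mp (hψ _ (CFC.posPart_nonneg y))).2
    have e2 := (Complex.nonneg_iff.mp (hψ _ (CFC.negPart_nonneg y))).2
    have : ψ y = ψ (y⁺) - ψ (y⁻) := by
      rw [← map_sub, CFC.posPart_sub_negPart y hy]
    rw [this, Complex.sub_im]
    linarith
  have hre := him (realPart x) (realPart x).2
  have hIm := him (imaginaryPart x) (imaginaryPart x).2
  have hx : (realPart x : A) + Complex.I • (imaginaryPart x : A) = x :=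
    realPart_add_I_smul_imaginaryPart x
  have hsx : (realPart x : A) - Complex.I • (imaginaryPart x : A) = star x := by
    conv_rhs => rw [← hx]
    rw [star_add, star_smul, (realPart x).2.star_eq, (imaginaryPart x).2.star_eq]
    simp [sub_eq_add_neg]
  have h2' : ψ (star x) = ψ (realPart x) - Complex.I * ψ (imaginaryPart x) := by
    rw [← hsx, map_sub, map_smul]; simp [smul_eq_mul]
  have h1' : ψ x = ψ (realPart x) + Complex.I * ψ (imaginaryPart x) := by
    rw [← hx, map_add, map_smul]; simp [smul_eq_mul]
  rw [h2', h1']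
  apply Complex.ext <;> simp [hre, hIm]

lemma cs_aux {A : Type*} [CStarAlgebra A] [PartialOrder A] [StarOrderedRing A]
    (ψ : A →ₗ[ℂ] ℂ) (hψ : ∀ x : A, 0 ≤ x → 0 ≤ ψ x) (hone : ψ 1 ≤ 1) (a : A) :
    star (ψ a) * ψ a ≤ ψ (star a * a) := by
  set m : ℂ := ψ a with hm
  have hherm := herm_aux ψ hψ
  have expand : ∀ t : ℂ, ψ (star (t • 1 + a) * (t • 1 + a))
      = star t * t * ψ 1 + star t * m + t * starRingEnd ℂ m + ψ (star a * a) := by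
    intro t
    have halg : star (t • (1:A) + a) * (t • 1 + a)
        = (star t * t) • (1:A) + star t • a + t • star a + star a * a := by
      rw [star_add, star_smul, star_one, add_mul, mul_add, mul_add]
      simp only [smul_mul_assoc, mul_smul_comm, smul_smul, one_mul, mul_one]
      rw [mul_comm t (star t)]
      abel
    rw [halg, map_add, map_add, map_add, map_smul, map_smul, map_smul, hherm a]
    simp only [smul_eq_mul, Complex.star_def]
    rfl
  have key : ∀ s : ℝ, 0 ≤ s^2 * Complex.normSq m * (ψ 1).re
      - 2 * s * Complex.normSq m + (ψ (star a * a)).re := by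
    intro s
    have h0 := hψ _ (star_mul_self_nonneg ((-(s:ℂ) * m) • 1 + a))
    rw [expand (-(s:ℂ) * m)] at h0
    have hre := (Complex.nonneg_iff.mp h0).1
    have : (star (-(s:ℂ) * m) * (-(s:ℂ) * m) * ψ 1 + star (-(s:ℂ) * m) * m
        + (-(s:ℂ) * m) * starRingEnd ℂ m + ψ (star a * a)).re
        = s^2 * Complex.normSq m * (ψ 1).re - 2 * s * Complex.normSq m
          + (ψ (star a * a)).re := by
      simp only [star_mul', star_neg, Complex.star_def, Complex.conj_ofReal]
      push_cast
      simp only [Complex.add_re, Complex.mul_re, Complex.mul_im, Complex.neg_re,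
        Complex.neg_im, Complex.ofReal_re, Complex.ofReal_im, Complex.conj_re,
        Complex.conj_im, Complex.normSq_apply]
      ring
    rw [this] at hre
    linarith
  -- positivity facts
  have hA0 : 0 ≤ (ψ 1).re := (Complex.nonneg_iff.mp (hψ 1 zero_le_one)).1
  have hA1 : (ψ 1).re ≤ 1 := by
    have := (Complex.le_def.mp hone).1
    simpa using this
  have hB0 : 0 ≤ (ψ (star a * a)).re := by
    have := key 0; simpa using this
  have hBim : (ψ (star a * a)).im = 0 := by
    have := (Complex.nonneg_iff.mp (hψ _ (star_mul_self_nonneg a))).2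
    linarith [this]
    
  have hM : Complex.normSq m ≤ (ψ (star a * a)).re := by
    rcases eq_or_lt_of_le (Complex.normSq_nonneg m) with hM0 | hM0
    · linarith
    · rcases eq_or_lt_of_le hA0 with hA | hA
      · -- (ψ 1).re = 0 : key s for large s forces contradiction
        exfalso
        set M := Complex.normSq m
        set B := (ψ (star a * a)).re
        have h1 := key ((B + 1) / (2 * M))
        rw [← hA] at h1
        have e : ((B + 1) / (2 * M)) * M = (B + 1) / 2 := by
          field_simp
        rw [mul_zero] at h1
        nlinarith
      · set M := Complex.normSq m
        set B := (ψ (star a * a)).re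
        set A0 := (ψ 1).re
        have h1 := key (1 / A0)
        have e : (1/A0)^2 * M * A0 - 2*(1/A0)*M + B = B - M / A0 := by
          field_simp
          ring
        rw [e] at h1
        have h2 : M ≤ M / A0 := by
          rw [le_div_iff₀ hA]
          nlinarith
        linarith
  -- conclude in ℂ
  rw [Complex.le_def]
  constructor
  · simpa [Complex.star_def, Complex.mul_re, Complex.normSq_apply] using hM
  · simp [Complex.star_def, Complex.mul_im, hBim]
    ring

lemma finite_schwarz {B : Type*} [CStarAlgebra B] [PartialOrder B] [StarOrderedRing B]
    {ι : Type*} (t : Finset ι) (lam : ι → ℂ) (b : ι → B)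
    (hb : ∀ i ∈ t, 0 ≤ b i) (hsum : ∑ i ∈ t, b i ≤ 1) :
    star (∑ i ∈ t, lam i • b i) * (∑ i ∈ t, lam i • b i)
      ≤ ∑ i ∈ t, (star (lam i) * lam i) • b i := by
  set S := ∑ i ∈ t, lam i • b i with hS
  have hbsa : ∀ i ∈ t, IsSelfAdjoint (b i) := fun i hi => .of_nonneg (hb i hi)
  have hstarS : star S = ∑ i ∈ t, star (lam i) • b i := by
    rw [hS, star_sum]
    exact Finset.sum_congr rfl fun i hi => by
      rw [star_smul, (hbsa i hi).star_eq]
  set s : ι → B := fun i => CFC.sqrt (b i) with hsdef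
  have hs_sa : ∀ i ∈ t, star (s i) = s i := fun i _ =>
    (IsSelfAdjoint.of_nonneg (CFC.sqrt_nonneg (a := b i))).star_eq
  have hs_sq : ∀ i ∈ t, s i * s i = b i := fun i hi => CFC.sqrt_mul_sqrt_self _ (hb i hi)
  have key : (0:B) ≤ ∑ i ∈ t, star (s i * S - lam i • s i) * (s i * S - lam i • s i) :=
    Finset.sum_nonneg fun i _ => star_mul_self_nonneg _
  have expand : ∀ i ∈ t, star (s i * S - lam i • s i) * (s i * S - lam i • s i)
      = star S * (b i * S) - star S * (lam i • b i) - (star (lam i) • b i) * S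
        + (star (lam i) * lam i) • b i := by
    intro i hi
    rw [← hs_sq i hi]
    rw [star_sub, star_mul, hs_sa i hi, star_smul, hs_sa i hi]
    noncomm_ring
    simp only [smul_add, smul_smul, neg_smul, one_smul, neg_neg, smul_neg, neg_add]
    rw [mul_comm (lam i) (star (lam i))]
  have key2 : (0:B) ≤ star S * ((∑ i ∈ t, b i) * S) - star S * S - star S * S
      + ∑ i ∈ t, (star (lam i) * lam i) • b i := by
    have e : ∑ i ∈ t, star (s i * S - lam i • s i) * (s i * S - lam i • s i)
        = star S * ((∑ i ∈ t, b i) * S) - star S * S - star S * S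
          + ∑ i ∈ t, (star (lam i) * lam i) • b i := by
      rw [Finset.sum_congr rfl expand]
      rw [Finset.sum_add_distrib, Finset.sum_sub_distrib, Finset.sum_sub_distrib,
        ← Finset.mul_sum, ← Finset.mul_sum, ← Finset.sum_mul, ← Finset.sum_mul,
        ← hstarS, ← hS]
    rw [← e]; exact key
  have hBle : star S * ((∑ i ∈ t, b i) * S) ≤ star S * S := by
    have h := star_left_conjugate_le_conjugate hsum S
    rw [mul_one] at h
    calc star S * ((∑ i ∈ t, b i) * S) = star S * (∑ i ∈ t, b i) * S := by
          rw [mul_assoc]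
      _ ≤ star S * S := h
  have h3 := add_le_add_left (sub_le_sub_right (sub_le_sub_right hBle (star S * S))
    (star S * S)) (∑ i ∈ t, (star (lam i) * lam i) • b i)
  have h4 : star S * S - star S * S - star S * S + ∑ i ∈ t, (star (lam i) * lam i) • b i
      = ∑ i ∈ t, (star (lam i) * lam i) • b i - star S * S := by abel
  rw [h4] at h3
  rw [← sub_nonneg]
  exact le_trans key2 h3

-- the partition-of-unity approximation step
lemma approx_aux {A : Type*} [CStarAlgebra A] [PartialOrder A] [StarOrderedRing A]
    [Nontrivial A] (a : A) (ha : IsStarNormal a) {ε : ℝ} (hε : 0 < ε) :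
    ∃ (t : Finset ℂ) (p : ℂ → A),
      (∀ i ∈ t, 0 ≤ p i) ∧ (∑ i ∈ t, p i = 1) ∧
      ‖a - ∑ i ∈ t, i • p i‖ ≤ ε ∧
      ‖star a * a - ∑ i ∈ t, (star i * i) • p i‖ ≤ ε * (2 * ‖a‖) := by
  obtain ⟨c, hcK, hcfin, hcov⟩ :=
    (spectrum.isCompact (𝕜 := ℂ) a).finite_cover_balls hε
  classical
  set t : Finset ℂ := hcfin.toFinset with ht
  have htm : ∀ {i : ℂ}, i ∈ t ↔ i ∈ c := by intro i; simp [ht]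
  set hf : ℂ → ℂ → ℝ := fun i z => max (ε - dist z i) 0 with hhf
  have hf_cont : ∀ i, Continuous (hf i) :=
    fun i => (continuous_const.sub (continuous_id.dist continuous_const)).max continuous_const
  have hf_nonneg : ∀ i z, 0 ≤ hf i z := fun i z => le_max_right _ _
  have hf_pos : ∀ z i, dist z i < ε → 0 < hf i z := fun z i h => by
    simp only [hhf, lt_max_iff]; left; linarith
  have hf_zero : ∀ i z, dist z i ≥ ε → hf i z = 0 := fun i z h => by
    simp only [hhf, max_eq_right_iff]; linarith
  set hs : ℂ → ℝ := fun z => ∑ i ∈ t, hf i z with hhs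
  have hs_cont : Continuous hs := by
    simp only [hhs]; exact continuous_finset_sum _ fun i _ => hf_cont i
  have hs_pos : ∀ z ∈ spectrum ℂ a, 0 < hs z := by
    intro z hz
    obtain ⟨i, hi, hzi⟩ := Set.mem_iUnion₂.mp (hcov hz)
    exact Finset.sum_pos' (fun j _ => hf_nonneg j z)
      ⟨i, htm.mpr hi, hf_pos z i (Metric.mem_ball.mp hzi)⟩
  set g : ℂ → ℂ → ℝ := fun i z => hf i z / hs z with hg
  have g_nonneg : ∀ i z, 0 ≤ g i z := fun i z =>
    div_nonneg (hf_nonneg i z) (Finset.sum_nonneg fun j _ => hf_nonneg j z)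
  have g_ne : ∀ i z, g i z ≠ 0 → dist z i < ε := by
    intro i z hgz
    by_contra hge
    exact hgz (by simp [hg, hf_zero i z (not_lt.mp hge)])
  have g_sum : ∀ z ∈ spectrum ℂ a, ∑ i ∈ t, g i z = 1 := by
    intro z hz
    simp only [hg]
    rw [← Finset.sum_div, div_self (ne_of_gt (hs_pos z hz))]
  have g_contOn : ∀ i, ContinuousOn (fun z => ((g i z : ℝ) : ℂ)) (spectrum ℂ a) := by
    intro i
    apply Complex.continuous_ofReal.comp_continuousOn
    exact ((hf_cont i).continuousOn).div hs_cont.continuousOn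
      fun z hz => ne_of_gt (hs_pos z hz)
  set p : ℂ → A := fun i => cfc (fun z => ((g i z : ℝ) : ℂ)) a with hp
  have hp_nonneg : ∀ i ∈ t, 0 ≤ p i := by
    intro i _
    exact cfc_nonneg fun z _ => by exact_mod_cast g_nonneg i z
  have hfun_sum : (∑ i ∈ t, fun z : ℂ => ((g i z : ℝ) : ℂ))
      = fun z : ℂ => ((∑ i ∈ t, g i z : ℝ) : ℂ) := by
    ext z; push_cast [Finset.sum_apply]; ring
  have hp_sum : ∑ i ∈ t, p i = 1 := by
    rw [← cfc_sum _ a t (fun i _ => g_contOn i), hfun_sum]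
    rw [cfc_congr (g := fun _ => (1:ℂ)) (fun z hz => by rw [g_sum z hz]; norm_num)]
    exact cfc_const_one ℂ a
  refine ⟨t, p, hp_nonneg, hp_sum, ?_, ?_⟩
  · -- ‖a - ∑ i • p i‖ ≤ ε
    have hsum_eq : ∑ i ∈ t, i • p i = cfc (fun z => ∑ i ∈ t, i * ((g i z : ℝ) : ℂ)) a := by
      have : (fun z : ℂ => ∑ i ∈ t, i * ((g i z : ℝ):ℂ))
          = ∑ i ∈ t, fun z : ℂ => i * ((g i z : ℝ):ℂ) := by ext z; simp [Finset.sum_apply]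
      rw [this, cfc_sum (fun i (z : ℂ) => i * ((g i z : ℝ) : ℂ)) a t
        (fun i _ => continuousOn_const.mul (g_contOn i))]
      exact Finset.sum_congr rfl fun i _ => (cfc_const_mul i _ a (g_contOn i)).symm
    have heq : a - ∑ i ∈ t, i • p i
        = cfc (fun z : ℂ => z - ∑ i ∈ t, i * ((g i z : ℝ) : ℂ)) a := by
      rw [cfc_sub (fun z : ℂ => z) (fun z : ℂ => ∑ i ∈ t, i * ((g i z : ℝ) : ℂ)) a
        (by fun_prop)
        (continuousOn_finset_sum t fun i _ => continuousOn_const.mul (g_contOn i)),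
        cfc_id' ℂ a, hsum_eq]
    rw [heq]
    apply norm_cfc_le hε.le
    intro z hz
    have hz1 : z - ∑ i ∈ t, i * ((g i z : ℝ):ℂ) = ∑ i ∈ t, ((g i z : ℝ):ℂ) * (z - i) := by
      have : ∑ i ∈ t, ((g i z : ℝ):ℂ) * (z - i)
          = (∑ i ∈ t, ((g i z : ℝ):ℂ)) * z - ∑ i ∈ t, i * ((g i z : ℝ):ℂ) := by
        rw [Finset.sum_mul, ← Finset.sum_sub_distrib]
        exact Finset.sum_congr rfl fun i _ => by ring
      rw [this]
      have : (∑ i ∈ t, ((g i z : ℝ):ℂ)) = 1 := by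
        push_cast [← Complex.ofReal_sum]
        exact_mod_cast congrArg (Complex.ofReal) (g_sum z hz)
      rw [this, one_mul]
    rw [hz1]
    calc ‖∑ i ∈ t, ((g i z : ℝ):ℂ) * (z - i)‖ ≤ ∑ i ∈ t, ‖((g i z : ℝ):ℂ) * (z - i)‖ :=
          norm_sum_le _ _
      _ ≤ ∑ i ∈ t, g i z * ε := by
          apply Finset.sum_le_sum
          intro i _
          rw [norm_mul, Complex.norm_real, Real.norm_of_nonneg (g_nonneg i z)]
          rcases eq_or_ne (g i z) 0 with h0 | h0
          · simp [h0]
          · exact mul_le_mul_of_nonneg_left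
              (by rw [← dist_eq_norm]; exact (g_ne i z h0).le) (g_nonneg i z)
      _ = ε := by rw [← Finset.sum_mul, g_sum z hz, one_mul]
  · -- second bound
    have hsum_eq : ∑ i ∈ t, (star i * i) • p i
        = cfc (fun z => ∑ i ∈ t, (star i * i) * ((g i z : ℝ) : ℂ)) a := by
      have : (fun z : ℂ => ∑ i ∈ t, (star i * i) * ((g i z : ℝ):ℂ))
          = ∑ i ∈ t, fun z : ℂ => (star i * i) * ((g i z : ℝ):ℂ) := by
        ext z; simp [Finset.sum_apply]
      rw [this, cfc_sum (fun i (z : ℂ) => (star i * i) * ((g i z : ℝ) : ℂ)) a t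
        (fun i _ => continuousOn_const.mul (g_contOn i))]
      exact Finset.sum_congr rfl fun i _ => (cfc_const_mul _ _ a (g_contOn i)).symm
    have hstar : star a * a = cfc (fun z : ℂ => star z * z) a := by
      rw [cfc_mul _ _ a (by fun_prop) (by fun_prop), cfc_star (fun z : ℂ => z) a,
        cfc_id' ℂ a]
    have heq : star a * a - ∑ i ∈ t, (star i * i) • p i
        = cfc (fun z : ℂ => star z * z - ∑ i ∈ t, (star i * i) * ((g i z : ℝ) : ℂ)) a := by
      rw [cfc_sub (fun z : ℂ => star z * z)
        (fun z : ℂ => ∑ i ∈ t, (star i * i) * ((g i z : ℝ) : ℂ)) a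
        (by fun_prop)
        (continuousOn_finset_sum t fun i _ => continuousOn_const.mul (g_contOn i)),
        ← hstar, hsum_eq]

    rw [heq]
    apply norm_cfc_le (by positivity)
    intro z hz
    have hz1 : star z * z - ∑ i ∈ t, (star i * i) * ((g i z : ℝ):ℂ)
        = ∑ i ∈ t, ((g i z : ℝ):ℂ) * (star z * z - star i * i) := by
      have : ∑ i ∈ t, ((g i z : ℝ):ℂ) * (star z * z - star i * i)
          = (∑ i ∈ t, ((g i z : ℝ):ℂ)) * (star z * z)
            - ∑ i ∈ t, (star i * i) * ((g i z : ℝ):ℂ) := by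
        rw [Finset.sum_mul, ← Finset.sum_sub_distrib]
        exact Finset.sum_congr rfl fun i _ => by ring
      rw [this]
      have h1 : (∑ i ∈ t, ((g i z : ℝ):ℂ)) = 1 := by
        push_cast [← Complex.ofReal_sum]
        exact_mod_cast congrArg (Complex.ofReal) (g_sum z hz)
      rw [h1, one_mul]
    rw [hz1]
    have hzn : ‖z‖ ≤ ‖a‖ := spectrum.norm_le_norm_of_mem hz
    calc ‖∑ i ∈ t, ((g i z : ℝ):ℂ) * (star z * z - star i * i)‖
        ≤ ∑ i ∈ t, ‖((g i z : ℝ):ℂ) * (star z * z - star i * i)‖ := norm_sum_le _ _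
      _ ≤ ∑ i ∈ t, g i z * (ε * (2 * ‖a‖)) := by
          apply Finset.sum_le_sum
          intro i hi
          rw [norm_mul, Complex.norm_real, Real.norm_of_nonneg (g_nonneg i z)]
          rcases eq_or_ne (g i z) 0 with h0 | h0
          · simp only [h0, Complex.ofReal_zero, zero_mul, norm_zero]
            positivity
          · apply mul_le_mul_of_nonneg_left _ (g_nonneg i z)
            have hin : ‖i‖ ≤ ‖a‖ :=
              spectrum.norm_le_norm_of_mem (hcK (htm.mp hi))
            have hdist : ‖z - i‖ ≤ ε := by
              rw [← dist_eq_norm]; exact (g_ne i z h0).le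
            calc ‖star z * z - star i * i‖
                = ‖star z * (z - i) + (star z - star i) * i‖ := by ring_nf
              _ ≤ ‖star z * (z - i)‖ + ‖(star z - star i) * i‖ := norm_add_le _ _
              _ ≤ ‖z‖ * ‖z - i‖ + ‖z - i‖ * ‖i‖ := by
                  rw [norm_mul, norm_mul, norm_star, ← star_sub, norm_star]
              _ ≤ ‖a‖ * ε + ε * ‖a‖ := by gcongr
              _ = ε * (2 * ‖a‖) := by ring
      _ = ε * (2 * ‖a‖) := by rw [← Finset.sum_mul, g_sum z hz, one_mul]

lemma csmul_nonneg {B : Type*} [CStarAlgebra B] [PartialOrder B] [StarOrderedRing B]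
    {r : ℝ} (hr : 0 ≤ r) {x : B} (hx : 0 ≤ x) : 0 ≤ (r : ℂ) • x := by
  conv_rhs => rw [← CFC.sqrt_mul_sqrt_self x hx]
  nth_rewrite 1 [← (IsSelfAdjoint.of_nonneg (CFC.sqrt_nonneg (a := x))).star_eq]
  have : (r:ℂ) • (star (CFC.sqrt x) * CFC.sqrt x)
      = star (((Real.sqrt r : ℝ):ℂ) • CFC.sqrt x) * (((Real.sqrt r : ℝ):ℂ) • CFC.sqrt x) := by
    rw [star_smul, smul_mul_smul_comm]
    congr 1
    rw [Complex.star_def, Complex.conj_ofReal, ← Complex.ofReal_mul,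
      Real.mul_self_sqrt hr]
  rw [this]
  exact star_mul_self_nonneg _

lemma algebraMapR_nonneg {B : Type*} [CStarAlgebra B] [PartialOrder B] [StarOrderedRing B]
    {r : ℝ} (hr : 0 ≤ r) : 0 ≤ algebraMap ℝ B r := by
  have h1 : (0:B) ≤ 1 := by simpa using star_mul_self_nonneg (1:B)
  rw [IsScalarTower.algebraMap_apply ℝ ℂ B, Algebra.algebraMap_eq_smul_one]
  exact csmul_nonneg hr h1

lemma algebraMapR_mono {B : Type*} [CStarAlgebra B] [PartialOrder B] [StarOrderedRing B]
    {r s : ℝ} (hrs : r ≤ s) : algebraMap ℝ B r ≤ algebraMap ℝ B s := by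
  rw [← sub_nonneg, ← map_sub]
  exact algebraMapR_nonneg (by linarith)

lemma branchA {𝔸 𝔹 : Type*} [CStarAlgebra 𝔸] [PartialOrder 𝔸] [StarOrderedRing 𝔸]
    [CStarAlgebra 𝔹] [PartialOrder 𝔹] [StarOrderedRing 𝔹]
    (hcomm : ∀ x y : 𝔸, x * y = y * x)
    (Φ : 𝔸 →ₗ[ℂ] 𝔹)
    (hpos : ∀ a : 𝔸, 0 ≤ a → 0 ≤ Φ a)
    (hunit : Φ 1 ≤ 1)
    (hcontr : ∀ a : 𝔸, ‖Φ a‖ ≤ ‖a‖) :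
    ∀ a : 𝔸, star (Φ a) * Φ a ≤ Φ (star a * a) := by
  intro a
  rcases subsingleton_or_nontrivial 𝔸 with hsub | hnt
  · have h0 : a = 0 := Subsingleton.elim _ _
    subst h0
    simp only [star_zero, zero_mul, map_zero, mul_zero]
    exact le_refl 0
  have ha : IsStarNormal a := ⟨hcomm (star a) a⟩
  -- main estimate for each δ > 0
  have main : ∀ δ : ℝ, 0 < δ →
      star (Φ a) * Φ a ≤ Φ (star a * a) + algebraMap ℝ 𝔹 δ := by
    intro δ hδ
    set R := ‖a‖ with hR
    have hR0 : 0 ≤ R := norm_nonneg a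
    set ε : ℝ := min (δ / (4 * R + 2)) 1 with hε
    have hεpos : 0 < ε := lt_min (by positivity) one_pos
    have hε1 : ε ≤ 1 := min_le_right _ _
    obtain ⟨t, p, hp0, hp1, herr1, herr2⟩ := approx_aux a ha hεpos
    set b : ℂ → 𝔹 := fun i => Φ (p i) with hb
    have hb0 : ∀ i ∈ t, 0 ≤ b i := fun i hi => hpos _ (hp0 i hi)
    have hbsum : ∑ i ∈ t, b i ≤ 1 := by
      rw [hb]
      calc ∑ i ∈ t, Φ (p i) = Φ (∑ i ∈ t, p i) := (map_sum Φ p t).symm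
        _ = Φ 1 := by rw [hp1]
        _ ≤ 1 := hunit
    set S : 𝔹 := ∑ i ∈ t, i • b i with hS
    have hSΦ : S = Φ (∑ i ∈ t, i • p i) := by
      rw [hS, map_sum]
      exact Finset.sum_congr rfl fun i _ => (map_smul Φ i (p i)).symm
    have hfs : star S * S ≤ ∑ i ∈ t, (star i * i) • b i :=
      finite_schwarz t id b hb0 hbsum
    have hx₂ : ∑ i ∈ t, (star i * i) • b i = Φ (∑ i ∈ t, (star i * i) • p i) := by
      rw [map_sum]
      exact Finset.sum_congr rfl fun i _ => (map_smul Φ _ (p i)).symm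
    -- norms
    have hYS : ‖Φ a - S‖ ≤ ε := by
      rw [hSΦ, ← map_sub]
      exact (hcontr _).trans herr1
    have hY : ‖Φ a‖ ≤ R := hcontr a
    have hSn : ‖S‖ ≤ R + ε := by
      have hrw : Φ a - (Φ a - S) = S := by abel
      calc ‖S‖ = ‖Φ a - (Φ a - S)‖ := by rw [hrw]
        _ ≤ ‖Φ a‖ + ‖Φ a - S‖ := norm_sub_le _ _
        _ ≤ R + ε := add_le_add hY hYS
    have hd1 : ‖star (Φ a) * Φ a - star S * S‖ ≤ ε * (2 * R + 1) := by
      have hid : star (Φ a) * Φ a - star S * S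
          = star (Φ a - S) * Φ a + star S * (Φ a - S) := by
        rw [star_sub]; noncomm_ring
      rw [hid]
      have e1 : ‖star (Φ a - S) * Φ a‖ ≤ ‖Φ a - S‖ * ‖Φ a‖ := by
        have := norm_mul_le (star (Φ a - S)) (Φ a)
        rwa [norm_star] at this
      have e2 : ‖star S * (Φ a - S)‖ ≤ ‖S‖ * ‖Φ a - S‖ := by
        have := norm_mul_le (star S) (Φ a - S)
        rwa [norm_star] at this
      calc ‖star (Φ a - S) * Φ a + star S * (Φ a - S)‖
          ≤ ‖star (Φ a - S) * Φ a‖ + ‖star S * (Φ a - S)‖ := norm_add_le _ _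
        _ ≤ ‖Φ a - S‖ * ‖Φ a‖ + ‖S‖ * ‖Φ a - S‖ := add_le_add e1 e2
        _ ≤ ε * R + (R + ε) * ε := by
            apply add_le_add
            · exact mul_le_mul hYS hY (norm_nonneg _) hεpos.le
            · exact mul_le_mul hSn hYS (norm_nonneg _) (by positivity)
        _ = ε * (2 * R + ε) := by ring
        _ ≤ ε * (2 * R + 1) := by nlinarith
    have hd2 : ‖Φ (∑ i ∈ t, (star i * i) • p i) - Φ (star a * a)‖ ≤ ε * (2 * R) := by
      rw [← map_sub]
      refine (hcontr _).trans ?_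
      rw [← norm_sub_rev]
      exact herr2
    -- assemble
    have hsa1 : IsSelfAdjoint (star (Φ a) * Φ a - star S * S) :=
      (IsSelfAdjoint.of_nonneg (star_mul_self_nonneg _)).sub
        (IsSelfAdjoint.of_nonneg (star_mul_self_nonneg _))
    have hppos : (0:𝔸) ≤ ∑ i ∈ t, (star i * i) • p i := by
      apply Finset.sum_nonneg
      intro i hi
      have : star i * i = ((Complex.normSq i : ℝ) : ℂ) := by
        rw [Complex.star_def, mul_comm, Complex.mul_conj]
      rw [this]
      exact csmul_nonneg (Complex.normSq_nonneg i) (hp0 i hi)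
    have hsa2 : IsSelfAdjoint (Φ (∑ i ∈ t, (star i * i) • p i) - Φ (star a * a)) :=
      (IsSelfAdjoint.of_nonneg (hpos _ hppos)).sub
        (IsSelfAdjoint.of_nonneg (hpos _ (star_mul_self_nonneg a)))
    -- chain of inequalities
    have step1 : star (Φ a) * Φ a ≤ star S * S + algebraMap ℝ 𝔹 (ε * (2 * R + 1)) := by
      have h := hsa1.le_algebraMap_norm_self
      have h' := h.trans (algebraMapR_mono hd1)
      calc star (Φ a) * Φ a = (star (Φ a) * Φ a - star S * S) + star S * S := by abel
        _ ≤ algebraMap ℝ 𝔹 (ε * (2 * R + 1)) + star S * S := add_le_add_left h' _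
        _ = star S * S + algebraMap ℝ 𝔹 (ε * (2 * R + 1)) := by abel
    have step2 : star S * S ≤ Φ (star a * a) + algebraMap ℝ 𝔹 (ε * (2 * R)) := by
      have h := hsa2.le_algebraMap_norm_self
      have h' := h.trans (algebraMapR_mono hd2)
      have hfs2 : star S * S ≤ Φ (∑ i ∈ t, (star i * i) • p i) := by
        rw [← hx₂]
        have : (∑ i ∈ t, i • b i) = ∑ i ∈ t, (id i : ℂ) • b i := rfl
        calc star S * S ≤ ∑ i ∈ t, (star (id i) * id i) • b i := by
              rw [hS]; exact finite_schwarz t id b hb0 hbsum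
          _ = ∑ i ∈ t, (star i * i) • b i := rfl
      calc star S * S ≤ Φ (∑ i ∈ t, (star i * i) • p i) := hfs2
        _ = (Φ (∑ i ∈ t, (star i * i) • p i) - Φ (star a * a)) + Φ (star a * a) := by abel
        _ ≤ algebraMap ℝ 𝔹 (ε * (2 * R)) + Φ (star a * a) := add_le_add_left h' _
        _ = Φ (star a * a) + algebraMap ℝ 𝔹 (ε * (2 * R)) := by abel
    have herrle : ε * (2 * R + 1) + ε * (2 * R) ≤ δ := by
      have h1 : ε ≤ δ / (4 * R + 2) := min_le_left _ _
      have h2 : 0 < 4 * R + 2 := by linarith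
      have := (le_div_iff₀ h2).mp h1
      calc ε * (2 * R + 1) + ε * (2 * R) = ε * (4 * R + 1) := by ring
        _ ≤ ε * (4 * R + 2) := by nlinarith
        _ ≤ δ := by linarith
    calc star (Φ a) * Φ a ≤ star S * S + algebraMap ℝ 𝔹 (ε * (2 * R + 1)) := step1
      _ ≤ (Φ (star a * a) + algebraMap ℝ 𝔹 (ε * (2 * R)))
            + algebraMap ℝ 𝔹 (ε * (2 * R + 1)) := add_le_add_left step2 _
      _ = Φ (star a * a) + algebraMap ℝ 𝔹 (ε * (2 * R + 1) + ε * (2 * R)) := by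
            rw [map_add]; abel
      _ ≤ Φ (star a * a) + algebraMap ℝ 𝔹 δ :=
            add_le_add_right (algebraMapR_mono herrle) _
  -- limit δ → 0
  have h1 : ∀ n : ℕ, star (Φ a) * Φ a
      ≤ Φ (star a * a) + algebraMap ℝ 𝔹 (1 / (n + 1)) := fun n => main _ (by positivity)
  have h2 : Filter.Tendsto (fun n : ℕ => Φ (star a * a) + algebraMap ℝ 𝔹 (1 / (n + 1)))
      Filter.atTop (nhds (Φ (star a * a))) := by
    have h3 := ((continuous_algebraMap ℝ 𝔹).tendsto 0).comp
      tendsto_one_div_add_atTop_nhds_zero_nat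
    have h4 := (tendsto_const_nhds (x := Φ (star a * a)) (f := Filter.atTop (α := ℕ))).add h3
    simpa using h4
  exact ge_of_tendsto h2 (Filter.Eventually.of_forall h1)

lemma branchB {𝔸 𝔹 : Type*} [CStarAlgebra 𝔸] [PartialOrder 𝔸] [StarOrderedRing 𝔸]
    [CStarAlgebra 𝔹] [PartialOrder 𝔹] [StarOrderedRing 𝔹]
    (hcomm : ∀ x y : 𝔹, x * y = y * x)
    (Φ : 𝔸 →ₗ[ℂ] 𝔹)
    (hpos : ∀ a : 𝔸, 0 ≤ a → 0 ≤ Φ a)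
    (hunit : Φ 1 ≤ 1) :
    ∀ a : 𝔸, star (Φ a) * Φ a ≤ Φ (star a * a) := by
  intro a
  rw [← sub_nonneg]
  have h1 : 0 ≤ Φ (star a * a) := hpos _ (star_mul_self_nonneg a)
  have hsa : IsSelfAdjoint (Φ (star a * a) - star (Φ a) * Φ a) :=
    (IsSelfAdjoint.of_nonneg h1).sub (IsSelfAdjoint.of_nonneg (star_mul_self_nonneg _))
  letI : NormedCommRing 𝔹 := { (inferInstance : NormedRing 𝔹) with mul_comm := hcomm }
  rw [StarOrderedRing.nonneg_iff_spectrum_nonneg (R := ℂ) _ hsa.isStarNormal]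
  intro z hz
  obtain ⟨f, rfl⟩ := WeakDual.CharacterSpace.mem_spectrum_iff_exists.mp hz
  -- f ∘ Φ is a positive functional
  have fpos : ∀ y : 𝔹, 0 ≤ y → 0 ≤ f y := by
    intro y hy
    rw [← CFC.sqrt_mul_sqrt_self y hy]
    nth_rewrite 1 [← (IsSelfAdjoint.of_nonneg (CFC.sqrt_nonneg (a := y))).star_eq]
    rw [map_mul, map_star]
    exact star_mul_self_nonneg _
  set ψ : 𝔸 →ₗ[ℂ] ℂ :=
    { toFun := fun x => f (Φ x)
      map_add' := fun x y => by simp [map_add]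
      map_smul' := fun c x => by simp [map_smul] } with hψdef
  have hψpos : ∀ x : 𝔸, 0 ≤ x → 0 ≤ ψ x := fun x hx => fpos _ (hpos x hx)
  have hψone : ψ 1 ≤ 1 := by
    have : 0 ≤ f (1 - Φ 1) := fpos _ (by rwa [sub_nonneg])
    rw [map_sub, map_one, sub_nonneg] at this
    exact this
  have hcs := cs_aux ψ hψpos hψone a
  rw [← sub_nonneg] at hcs
  rw [map_sub f, map_mul f, map_star f]
  exact hcs

end SchwarzHelpers


theorem positive_contractive_commutative_is_schwarz
    {𝔸 𝔹 : Type*} [CStarAlgebra 𝔸] [PartialOrder 𝔸] [StarOrderedRing 𝔸]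
    [CStarAlgebra 𝔹] [PartialOrder 𝔹] [StarOrderedRing 𝔹]
    (hcomm : (∀ x y : 𝔸, x * y = y * x) ∨ (∀ x y : 𝔹, x * y = y * x))
    (Φ : 𝔸 →ₗ[ℂ] 𝔹)
    (hpos : ∀ a : 𝔸, 0 ≤ a → 0 ≤ Φ a)
    (hunit : Φ 1 ≤ 1)
    (hcontr : ∀ a : 𝔸, ‖Φ a‖ ≤ ‖a‖) :
    ∀ a : 𝔸, star (Φ a) * Φ a ≤ Φ (star a * a) := by
  rcases hcomm with hA | hB
  · exact branchA hA Φ hpos hunit hcontr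
  · exact branchB hB Φ hpos hunit
end
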